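/- Solution of the two-point boundary value problem: let T > 0 and q₀, q_T, v₀, v_T be real numbers, and set D := 2·(cosh(T) − 1) − T·sinh(T) (which is nonzero), λ₁ := (sinh(T)·(q_T − q₀) + (1 − cosh(T))·(v₀ + v_T))/D, and λ₂ := (cosh(T)·v₀ − v_T + (cosh(T) − 1)·λ₁)/sinh(T) (well defined since sinh(T) ≠ 0). Then the vector x(T) := exp(T·H)·(q₀, v₀, λ₁, λ₂)ᵀ, where H is the 4×4 real matrix with rows (0, 1, 0, 0), (0, 0, 0, −1), (0, 0, 0, 0), (0, −1, −1, 0), satisfies x(T)₁ = q_T and x(T)₂ = v_T. -/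

import Mathlib

open scoped Nat

private def Hm : Matrix (Fin 4) (Fin 4) ℝ := !![0,1,0,0;0,0,0,-1;0,0,0,0;0,-1,-1,0]
private def Hm2 : Matrix (Fin 4) (Fin 4) ℝ := !![0,0,0,-1;0,1,1,0;0,0,0,0;0,0,0,1]
private def Hm3 : Matrix (Fin 4) (Fin 4) ℝ := !![0,1,1,0;0,0,0,-1;0,0,0,0;0,-1,-1,0]

private lemma Hm_sq : Hm * Hm = Hm2 := by
  ext i j; fin_cases i <;> fin_cases j <;>
    simp [Hm, Hm2, Matrix.mul_apply, Fin.sum_univ_four, Matrix.vecHead, Matrix.vecTail]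

private lemma Hm2_mul_Hm : Hm2 * Hm = Hm3 := by
  ext i j; fin_cases i <;> fin_cases j <;>
    simp [Hm, Hm2, Hm3, Matrix.mul_apply, Fin.sum_univ_four, Matrix.vecHead, Matrix.vecTail]

private lemma Hm2_sq : Hm2 * Hm2 = Hm2 := by
  ext i j; fin_cases i <;> fin_cases j <;>
    simp [Hm2, Matrix.mul_apply, Fin.sum_univ_four, Matrix.vecHead, Matrix.vecTail]

private lemma Hm_pow_even (k : ℕ) : Hm ^ (2*(k+1)) = Hm2 := by
  induction k with
  | zero => simpa [pow_succ, pow_one] using Hm_sq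
  | succ n ih =>
      have : 2*(n+1+1) = 2*(n+1) + 2 := by ring
      rw [this, pow_add, ih, pow_two, Hm_sq, Hm2_sq]

private lemma Hm_pow_odd (k : ℕ) : Hm ^ (2*(k+1)+1) = Hm3 := by
  rw [pow_succ, Hm_pow_even, Hm2_mul_Hm]

set_option maxHeartbeats 1000000 in
private lemma exp_THm (T : ℝ) :
    NormedSpace.exp (T • Hm) =
      (1 + (Real.cosh T - 1) • Hm2) + (T • Hm + (Real.sinh T - T) • Hm3) := by
  have hrw : NormedSpace.exp (T • Hm) = ∑' n : ℕ, ((n ! : ℝ)⁻¹) • (T • Hm) ^ n :=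
    congrFun (NormedSpace.exp_eq_tsum ℝ) (T • Hm)
  rw [hrw]
  refine HasSum.tsum_eq ?_
  have hcosh1 : HasSum (fun n : ℕ => T ^ (2 * (n + 1)) / (2 * (n + 1)) !)
      (Real.cosh T - 1) := by
    simpa using (hasSum_nat_add_iff' (f := fun n => T ^ (2 * n) / (2 * n) !) 1).mpr
      (Real.hasSum_cosh T)
  have hsinh1 : HasSum (fun n : ℕ => T ^ (2 * (n + 1) + 1) / (2 * (n + 1) + 1) !)
      (Real.sinh T - T) := by
    simpa using (hasSum_nat_add_iff' (f := fun n => T ^ (2 * n + 1) / (2 * n + 1) !) 1).mpr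
      (Real.hasSum_sinh T)
  refine HasSum.even_add_odd ?_ ?_
  · have hfun : (fun k : ℕ => (((2 * (k + 1)) ! : ℝ)⁻¹) • (T • Hm) ^ (2 * (k + 1))) =
        fun k : ℕ => (T ^ (2 * (k + 1)) / ((2 * (k + 1)) ! : ℝ)) • Hm2 := by
      funext k
      rw [smul_pow, Hm_pow_even, smul_smul, inv_mul_eq_div]
    have he : HasSum (fun k : ℕ => (((2 * (k + 1)) ! : ℝ)⁻¹) • (T • Hm) ^ (2 * (k + 1)))
        ((Real.cosh T - 1) • Hm2) := by
      rw [hfun]; exact hcosh1.smul_const Hm2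
    have h2 := HasSum.zero_add
      (f := fun k : ℕ => (((2 * k) ! : ℝ)⁻¹) • (T • Hm) ^ (2 * k)) he
    have h0 : ((fun k : ℕ => (((2 * k) ! : ℝ)⁻¹) • (T • Hm) ^ (2 * k)) 0) = 1 := by
      norm_num
    beta_reduce at h0
    rw [h0] at h2
    exact h2
  · have hfun : (fun k : ℕ => (((2 * (k + 1) + 1) ! : ℝ)⁻¹) • (T • Hm) ^ (2 * (k + 1) + 1)) =
        fun k : ℕ => (T ^ (2 * (k + 1) + 1) / ((2 * (k + 1) + 1) ! : ℝ)) • Hm3 := by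
      funext k
      rw [smul_pow, Hm_pow_odd, smul_smul, inv_mul_eq_div]
    have ho : HasSum (fun k : ℕ => (((2 * (k + 1) + 1) ! : ℝ)⁻¹) • (T • Hm) ^ (2 * (k + 1) + 1))
        ((Real.sinh T - T) • Hm3) := by
      rw [hfun]; exact hsinh1.smul_const Hm3
    have h2 := HasSum.zero_add
      (f := fun k : ℕ => (((2 * k + 1) ! : ℝ)⁻¹) • (T • Hm) ^ (2 * k + 1)) ho
    have h0 : ((fun k : ℕ => (((2 * k + 1) ! : ℝ)⁻¹) • (T • Hm) ^ (2 * k + 1)) 0)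
        = T • Hm := by norm_num
    beta_reduce at h0
    rw [h0] at h2
    exact h2

private lemma sinh_lt_mul_cosh {x : ℝ} (hx : 0 < x) : Real.sinh x < x * Real.cosh x := by
  have key : StrictMonoOn (fun y => y * Real.cosh y - Real.sinh y) (Set.Ici 0) := by
    refine strictMonoOn_of_deriv_pos (convex_Ici 0) (by fun_prop) ?_
    intro y hy
    rw [interior_Ici] at hy
    have h1 : HasDerivAt (fun y : ℝ => y * Real.cosh y - Real.sinh y)
        (1 * Real.cosh y + y * Real.sinh y - Real.cosh y) y :=
      ((hasDerivAt_id y).mul (Real.hasDerivAt_cosh y)).sub (Real.hasDerivAt_sinh y)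
    rw [h1.deriv]
    have h2 := Real.sinh_pos_iff.mpr hy
    have h3 : (0:ℝ) < y := hy
    nlinarith [mul_pos h3 h2]
  have h := key Set.self_mem_Ici (Set.mem_Ici.mpr hx.le) hx
  simpa using h

private lemma D_neg {T : ℝ} (hT : 0 < T) :
    2 * (Real.cosh T - 1) - T * Real.sinh T < 0 := by
  obtain ⟨u, hu, rfl⟩ : ∃ u : ℝ, 0 < u ∧ T = 2 * u := ⟨T / 2, by linarith, by ring⟩
  rw [Real.cosh_two_mul, Real.sinh_two_mul]
  nlinarith [sinh_lt_mul_cosh hu, Real.sinh_pos_iff.mpr hu, Real.cosh_sq u, Real.cosh_pos u]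

/-- Solution of the two-point boundary value problem: for `T > 0` and boundary
data `q₀, q_T, v₀, v_T`, with `D = 2 (cosh T - 1) - T sinh T ≠ 0`,
`lam₁ = (sinh T (q_T - q₀) + (1 - cosh T)(v₀ + v_T)) / D` and
`lam₂ = (cosh T v₀ - v_T + (cosh T - 1) lam₁) / sinh T`, the vector
`x(T) = exp (T • H) (q₀, v₀, lam₁, lam₂)ᵀ` satisfies `x(T)₁ = q_T`, `x(T)₂ = v_T`. -/
theorem two_point_bvp_solution (T : ℝ) (hT : 0 < T) (q₀ qT v₀ vT : ℝ)
    (H : Matrix (Fin 4) (Fin 4) ℝ)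
    (hH : H = !![0, 1, 0, 0; 0, 0, 0, -1; 0, 0, 0, 0; 0, -1, -1, 0])
    (D lam₁ lam₂ : ℝ)
    (hD : D = 2 * (Real.cosh T - 1) - T * Real.sinh T)
    (hlam₁ : lam₁ = (Real.sinh T * (qT - q₀) + (1 - Real.cosh T) * (v₀ + vT)) / D)
    (hlam₂ : lam₂ = (Real.cosh T * v₀ - vT + (Real.cosh T - 1) * lam₁) / Real.sinh T) :
    D ≠ 0 ∧ Real.sinh T ≠ 0 ∧
      (NormedSpace.exp (T • H)).mulVec ![q₀, v₀, lam₁, lam₂] 0 = qT ∧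
      (NormedSpace.exp (T • H)).mulVec ![q₀, v₀, lam₁, lam₂] 1 = vT := by
  have hs : Real.sinh T ≠ 0 := ne_of_gt (Real.sinh_pos_iff.mpr hT)
  have hD0 : D ≠ 0 := by rw [hD]; exact ne_of_lt (D_neg hT)
  have hH' : H = Hm := hH
  have h1 : D * lam₁ = Real.sinh T * (qT - q₀) + (1 - Real.cosh T) * (v₀ + vT) := by
    rw [hlam₁, mul_comm, div_mul_cancel₀ _ hD0]
  have h2 : Real.sinh T * lam₂ = Real.cosh T * v₀ - vT + (Real.cosh T - 1) * lam₁ := by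
    rw [hlam₂, mul_comm, div_mul_cancel₀ _ hs]
  have hcs := Real.cosh_sq_sub_sinh_sq T
  refine ⟨hD0, hs, ?_, ?_⟩
  · have e0 : (NormedSpace.exp (T • H)).mulVec ![q₀, v₀, lam₁, lam₂] 0
        = q₀ + Real.sinh T * v₀ + (Real.sinh T - T) * lam₁
          + (1 - Real.cosh T) * lam₂ := by
      rw [hH', exp_THm]
      simp [Hm, Hm2, Hm3, Matrix.mulVec, dotProduct, Fin.sum_univ_four,
        Matrix.vecHead, Matrix.vecTail]
      try ring
    rw [e0]
    have key : Real.sinh T * ((q₀ + Real.sinh T * v₀ + (Real.sinh T - T) * lam₁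
        + (1 - Real.cosh T) * lam₂) - qT) = 0 := by
      linear_combination (1 - Real.cosh T) * h2 + h1 + (-v₀ - lam₁) * hcs
        + (-lam₁) * hD
    have hG := (mul_eq_zero.mp key).resolve_left hs
    linarith
  · have e1 : (NormedSpace.exp (T • H)).mulVec ![q₀, v₀, lam₁, lam₂] 1
        = Real.cosh T * v₀ + (Real.cosh T - 1) * lam₁ - Real.sinh T * lam₂ := by
      rw [hH', exp_THm]
      simp [Hm, Hm2, Hm3, Matrix.mulVec, dotProduct, Fin.sum_univ_four,
        Matrix.vecHead, Matrix.vecTail]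
      try ring
    rw [e1]
    linear_combination -h2
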